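/- In the abstract gradient-discretisation setting with the regularised-solver setting, for every i ≥ 1 one has the intermediate inequality L·‖e_i‖_m² + 2·δt·‖G e_i‖² ≤ ((L − 1/L_ζ)² / L)·‖e_{i−1}‖_m². -/

import Mathlib

/-- Weighted inner product `⟨u, v⟩_m = ∑ j, m j * u j * v j` on `X = B → ℝ`. -/
noncomputable def innerM {B : Type*} [Fintype B] (m : B → ℝ) (u v : B → ℝ) : ℝ :=
  ∑ j, m j * u j * v j

/-- Weighted norm `‖u‖_m = ⟨u, u⟩_m^{1/2}`. -/
noncomputable def normM {B : Type*} [Fintype B] (m : B → ℝ) (u : B → ℝ) : ℝ :=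
  Real.sqrt (innerM m u u)

/-- The dual norm `‖v‖_* = sup { ⟨v, w⟩_m : w ∈ X, ‖G w‖ = 1 }`. -/
noncomputable def dualNorm {B : Type*} [Fintype B] (m : B → ℝ)
    {F : Type*} [NormedAddCommGroup F] [InnerProductSpace ℝ F]
    (G : (B → ℝ) →ₗ[ℝ] F) (v : B → ℝ) : ℝ :=
  sSup {r : ℝ | ∃ w : B → ℝ, ‖G w‖ = 1 ∧ r = innerM m v w}

set_option maxHeartbeats 1000000 in
/-- Intermediate inequality in the proof of Lemma 3.2 (after Hölder and Young):
`L ‖e_i‖_m² + 2 δt ‖G e_i‖² ≤ ((L - 1/L_ζ)²/L) ‖e_{i-1}‖_m²` for every `i ≥ 1`. -/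
theorem stmt_17 {B : Type*} [Fintype B] [Nonempty B] (m : B → ℝ) (hm : ∀ j, 0 < m j)
    {F : Type*} [NormedAddCommGroup F] [InnerProductSpace ℝ F]
    (G : (B → ℝ) →ₗ[ℝ] F) (hG : Function.Injective G)
    (δt Lζ L C : ℝ) (hδt : 0 < δt) (hLζ : 0 < Lζ) (hC : 0 < C)
    (Z : ℝ → ℝ) (hZ : Differentiable ℝ Z)
    (hZ' : ∀ s : ℝ, 1 / Lζ ≤ deriv Z s ∧ deriv Z s ≤ L)
    (hpoin : ∀ w : B → ℝ, normM m w ≤ C * ‖G w‖)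
    (b : (B → ℝ) →ₗ[ℝ] ℝ)
    (v : B → ℝ)
    (hv : ∀ φ : B → ℝ,
      innerM m (fun j => Z (v j)) φ + δt * (inner ℝ (G v) (G φ) : ℝ) = b φ)
    (vseq : ℕ → B → ℝ)
    (hit : ∀ i : ℕ, 1 ≤ i → ∀ φ : B → ℝ,
      L * innerM m (vseq i) φ + δt * (inner ℝ (G (vseq i)) (G φ) : ℝ)
        = innerM m (fun j => L * vseq (i - 1) j - Z (vseq (i - 1) j)) φ + b φ) :
    ∀ i : ℕ, 1 ≤ i →
      L * normM m (v - vseq i) ^ 2 + 2 * δt * ‖G (v - vseq i)‖ ^ 2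
        ≤ ((L - 1 / Lζ) ^ 2 / L) * normM m (v - vseq (i - 1)) ^ 2 := by
  intro i hi
  have hL1 : 1 / Lζ ≤ L := le_trans (hZ' 0).1 (hZ' 0).2
  have hLζ' : 0 < 1 / Lζ := by positivity
  have hL : 0 < L := lt_of_lt_of_le hLζ' hL1
  set K : ℝ := L - 1 / Lζ with hK
  have hK0 : 0 ≤ K := sub_nonneg.mpr hL1
  set e : B → ℝ := v - vseq i with he
  set d : B → ℝ := v - vseq (i - 1) with hd
  set w : B → ℝ := fun j =>
    (L * v j - Z (v j)) - (L * vseq (i - 1) j - Z (vseq (i - 1) j)) with hw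
  -- Step A : key identity
  have hT1 : innerM m e e = innerM m v e - innerM m (vseq i) e := by
    unfold innerM
    rw [← Finset.sum_sub_distrib]
    refine Finset.sum_congr rfl fun j _ => ?_
    simp [he, Pi.sub_apply]; ring
  have hT2 : innerM m (fun j => L * vseq (i - 1) j - Z (vseq (i - 1) j)) e
      = L * innerM m (vseq (i - 1)) e - innerM m (fun j => Z (vseq (i - 1) j)) e := by
    unfold innerM
    rw [Finset.mul_sum, ← Finset.sum_sub_distrib]
    refine Finset.sum_congr rfl fun j _ => ?_
    ring
  have hT3 : innerM m w e
      = L * innerM m v e - innerM m (fun j => Z (v j)) e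
        - (L * innerM m (vseq (i - 1)) e - innerM m (fun j => Z (vseq (i - 1) j)) e) := by
    unfold innerM
    rw [Finset.mul_sum, Finset.mul_sum, ← Finset.sum_sub_distrib,
      ← Finset.sum_sub_distrib, ← Finset.sum_sub_distrib]
    refine Finset.sum_congr rfl fun j _ => ?_
    simp [hw]; ring
  have hGe : G e = G v - G (vseq i) := by rw [he, map_sub]
  have key : L * innerM m e e + δt * (inner ℝ (G e) (G e) : ℝ) = innerM m w e := by
    have h1 := hv e
    have h2 := hit i hi e
    rw [hGe] at h1 h2 ⊢
    rw [inner_sub_left, hT1, hT3]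
    rw [hT2] at h2
    linear_combination h1 - h2
  -- Step B : pointwise Lipschitz bound
  have hlip : ∀ a c : ℝ, |(L * a - Z a) - (L * c - Z c)| ≤ K * |a - c| := by
    have hdiff : Differentiable ℝ (fun s : ℝ => L * s - Z s) :=
      (differentiable_id.const_mul L).sub hZ
    have hder : ∀ x : ℝ, deriv (fun s : ℝ => L * s - Z s) x = L - deriv Z x := by
      intro x
      have h := ((hasDerivAt_id x).const_mul L).sub (hZ x).hasDerivAt
      have h' := h.deriv
      simp only [mul_one] at h'
      exact h'
    have hlw : LipschitzWith K.toNNReal (fun s : ℝ => L * s - Z s) := by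
      refine lipschitzWith_of_nnnorm_deriv_le hdiff fun x => ?_
      have h1 := (hZ' x).1
      have h2 := (hZ' x).2
      rw [← NNReal.coe_le_coe]
      simp only [coe_nnnorm, Real.coe_toNNReal _ hK0, hder, Real.norm_eq_abs]
      rw [abs_le]
      constructor <;> rw [hK] <;> linarith
    intro a c
    have h := hlw.dist_le_mul a c
    simpa only [Real.dist_eq, Real.coe_toNNReal _ hK0] using h
  -- Step C : weighted Cauchy-Schwarz
  have hCS : ∀ x y : B → ℝ,
      ∑ j, m j * |x j| * |y j| ≤ normM m x * normM m y := by
    intro x y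
    have h := Finset.sum_mul_sq_le_sq_mul_sq Finset.univ
      (fun j => Real.sqrt (m j) * |x j|) (fun j => Real.sqrt (m j) * |y j|)
    have hsum1 : ∀ j : B, (Real.sqrt (m j) * |x j|) * (Real.sqrt (m j) * |y j|)
        = m j * |x j| * |y j| := by
      intro j
      have hmm : Real.sqrt (m j) * Real.sqrt (m j) = m j := Real.mul_self_sqrt (hm j).le
      calc Real.sqrt (m j) * |x j| * (Real.sqrt (m j) * |y j|)
          = (Real.sqrt (m j) * Real.sqrt (m j)) * (|x j| * |y j|) := by ring
        _ = m j * |x j| * |y j| := by rw [hmm]; ring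
    have hsq : ∀ (z : B → ℝ) (j : B), (Real.sqrt (m j) * |z j|) ^ 2 = m j * z j * z j := by
      intro z j
      rw [mul_pow, Real.sq_sqrt (hm j).le, sq_abs]
      ring
    rw [Finset.sum_congr rfl (fun j _ => hsum1 j),
        Finset.sum_congr rfl (fun j _ => hsq x j),
        Finset.sum_congr rfl (fun j _ => hsq y j)] at h
    have hnn : 0 ≤ ∑ j, m j * |x j| * |y j| :=
      Finset.sum_nonneg fun j _ =>
        mul_nonneg (mul_nonneg (hm j).le (abs_nonneg _)) (abs_nonneg _)
    have hx : (∑ j, m j * x j * x j) = innerM m x x := rfl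
    have hy : (∑ j, m j * y j * y j) = innerM m y y := rfl
    rw [hx, hy] at h
    have hxx : 0 ≤ innerM m x x :=
      Finset.sum_nonneg fun j _ => by nlinarith [(hm j).le, sq_nonneg (x j)]
    have hyy : 0 ≤ innerM m y y :=
      Finset.sum_nonneg fun j _ => by nlinarith [(hm j).le, sq_nonneg (y j)]
    unfold normM
    rw [← Real.sqrt_mul hxx]
    exact (Real.le_sqrt hnn (mul_nonneg hxx hyy)).2 h
  have hstep : innerM m w e ≤ K * (normM m d * normM m e) := by
    have h1 : innerM m w e ≤ ∑ j, m j * |w j| * |e j| := by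
      unfold innerM
      refine Finset.sum_le_sum fun j _ => ?_
      have h : w j * e j ≤ |w j| * |e j| := by
        calc w j * e j ≤ |w j * e j| := le_abs_self _
        _ = |w j| * |e j| := abs_mul _ _
      calc m j * w j * e j = m j * (w j * e j) := by ring
        _ ≤ m j * (|w j| * |e j|) := mul_le_mul_of_nonneg_left h (hm j).le
        _ = m j * |w j| * |e j| := by ring
    have h2 : (∑ j, m j * |w j| * |e j|) ≤ ∑ j, m j * (K * |d j|) * |e j| := by
      refine Finset.sum_le_sum fun j _ => ?_
      have hb : |w j| ≤ K * |d j| := by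
        have := hlip (v j) (vseq (i - 1) j)
        simpa [hw, hd, Pi.sub_apply] using this
      exact mul_le_mul_of_nonneg_right
        (mul_le_mul_of_nonneg_left hb (hm j).le) (abs_nonneg _)
    have h3 : (∑ j, m j * (K * |d j|) * |e j|) = K * ∑ j, m j * |d j| * |e j| := by
      rw [Finset.mul_sum]; refine Finset.sum_congr rfl fun j _ => ?_; ring
    calc innerM m w e ≤ ∑ j, m j * |w j| * |e j| := h1
      _ ≤ ∑ j, m j * (K * |d j|) * |e j| := h2
      _ = K * ∑ j, m j * |d j| * |e j| := h3
      _ ≤ K * (normM m d * normM m e) :=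
          mul_le_mul_of_nonneg_left (hCS d e) hK0
  -- assemble
  have hee : normM m e ^ 2 = innerM m e e := by
    unfold normM
    exact Real.sq_sqrt (Finset.sum_nonneg fun j _ => by
      nlinarith [(hm j).le, sq_nonneg (e j)])
  have hGnorm : (inner ℝ (G e) (G e) : ℝ) = ‖G e‖ ^ 2 := real_inner_self_eq_norm_sq _
  have hne : 0 ≤ normM m e := Real.sqrt_nonneg _
  have hnd : 0 ≤ normM m d := Real.sqrt_nonneg _
  have hyoung : K * (normM m d * normM m e)
      ≤ K ^ 2 / (2 * L) * normM m d ^ 2 + L / 2 * normM m e ^ 2 := by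
    have h2L : (0:ℝ) < 2 * L := by linarith
    rw [← mul_le_mul_iff_of_pos_left h2L]
    have hdd : 2 * L * (K ^ 2 / (2 * L) * normM m d ^ 2 + L / 2 * normM m e ^ 2)
        = K ^ 2 * normM m d ^ 2 + L ^ 2 * normM m e ^ 2 := by
      field_simp
    rw [hdd]
    nlinarith [sq_nonneg (K * normM m d - L * normM m e)]
  have hfinal := le_trans (le_of_eq key) (le_trans hstep hyoung)
  rw [← hee, hGnorm] at hfinal
  have hdiv2 : K ^ 2 / (2 * L) * normM m d ^ 2 * 2 = K ^ 2 / L * normM m d ^ 2 := by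
    field_simp
  have hgoal : L * normM m e ^ 2 + 2 * δt * ‖G e‖ ^ 2
      ≤ K ^ 2 / L * normM m d ^ 2 := by
    linarith [hfinal, hdiv2]
  exact hgoal
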